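/- Let b, a, r, s be real constants with r ≠ 0, b ≠ 1, and s ∈ {1, -1}. Consider the Hamiltonian h(Z, P, π) = r Z⁻¹ P² π² + (s + (1 - a s) Z⁻¹ P) π - (b/(2r(b-1))) P^{b-1} for Z > 0, P > 0. Then Hamilton's equations dP/dZ = ∂h/∂π, dπ/dZ = -∂h/∂P imply that P satisfies the second-order ODE P'' = (P')²/P - P'/Z + (bP^b + a)/Z - 1/P. -/

import Mathlib

set_option maxHeartbeats 1600000


/-- Hamilton's equations for
`h = rZ⁻¹P²π² + (s + (1-as)Z⁻¹P)π - (b/(2r(b-1)))P^{b-1}`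
imply the second-order similarity ODE
`P'' = (P')²/P - P'/Z + (bP^b + a)/Z - 1/P`. -/
theorem hamiltonian_form_similarity (b a r s : ℝ) (hr : r ≠ 0) (hb : b ≠ 1)
    (hsgn : s = 1 ∨ s = -1)
    (h : ℝ → ℝ → ℝ → ℝ)
    (hh : ∀ Z p q : ℝ, h Z p q =
      r * Z⁻¹ * p ^ 2 * q ^ 2 + (s + (1 - a * s) * Z⁻¹ * p) * q
        - (b / (2 * r * (b - 1))) * p ^ (b - 1))
    (P π : ℝ → ℝ)
    (hPdiff : ∀ Z : ℝ, 0 < Z → DifferentiableAt ℝ P Z)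
    (hPdiff2 : ∀ Z : ℝ, 0 < Z → DifferentiableAt ℝ (deriv P) Z)
    (hπdiff : ∀ Z : ℝ, 0 < Z → DifferentiableAt ℝ π Z)
    (hPpos : ∀ Z : ℝ, 0 < Z → 0 < P Z)
    (ham1 : ∀ Z : ℝ, 0 < Z →
      deriv P Z = deriv (fun q => h Z (P Z) q) (π Z))
    (ham2 : ∀ Z : ℝ, 0 < Z →
      deriv π Z = -deriv (fun p => h Z p (π Z)) (P Z)) :
    ∀ Z : ℝ, 0 < Z →
      deriv (deriv P) Z =
        (deriv P Z) ^ 2 / P Z - deriv P Z / Z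
          + (b * (P Z) ^ b + a) / Z - 1 / P Z := by
  have hb1 : b - 1 ≠ 0 := sub_ne_zero.mpr hb
  -- explicit form of Hamilton's first equation
  have ham1' : ∀ Z : ℝ, 0 < Z →
      deriv P Z = 2 * r * Z⁻¹ * (P Z) ^ 2 * (π Z) + s + (1 - a * s) * Z⁻¹ * (P Z) := by
    intro Z hZ
    rw [ham1 Z hZ]
    have e1 : (fun q => h Z (P Z) q) =
        fun q => r * Z⁻¹ * (P Z) ^ 2 * q ^ 2 + (s + (1 - a * s) * Z⁻¹ * (P Z)) * q
          - (b / (2 * r * (b - 1))) * (P Z) ^ (b - 1) := funext fun q => hh Z (P Z) q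
    have h2 : HasDerivAt (fun q : ℝ => q ^ 2) (2 * π Z) (π Z) := by
      simpa using hasDerivAt_pow 2 (π Z)
    have hd : HasDerivAt
        (fun q => r * Z⁻¹ * (P Z) ^ 2 * q ^ 2 + (s + (1 - a * s) * Z⁻¹ * (P Z)) * q
          - (b / (2 * r * (b - 1))) * (P Z) ^ (b - 1))
        (r * Z⁻¹ * (P Z) ^ 2 * (2 * π Z) + (s + (1 - a * s) * Z⁻¹ * (P Z))) (π Z) := by
      have := ((h2.const_mul (r * Z⁻¹ * (P Z) ^ 2)).add
        ((hasDerivAt_id (π Z)).const_mul (s + (1 - a * s) * Z⁻¹ * (P Z)))).sub_const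
        ((b / (2 * r * (b - 1))) * (P Z) ^ (b - 1))
      simpa using this
    rw [e1, hd.deriv]; ring
  -- explicit form of Hamilton's second equation
  have ham2' : ∀ Z : ℝ, 0 < Z →
      deriv π Z = -(2 * r * Z⁻¹ * (P Z) * (π Z) ^ 2 + (1 - a * s) * Z⁻¹ * (π Z))
        + (b / (2 * r)) * (P Z) ^ (b - 2) := by
    intro Z hZ
    have hu : (0:ℝ) < P Z := hPpos Z hZ
    rw [ham2 Z hZ]
    have e1 : (fun p => h Z p (π Z)) =
        fun p => r * Z⁻¹ * p ^ 2 * (π Z) ^ 2 + (s + (1 - a * s) * Z⁻¹ * p) * (π Z)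
          - (b / (2 * r * (b - 1))) * p ^ (b - 1) := funext fun p => hh Z p (π Z)
    have t1 : HasDerivAt (fun p : ℝ => r * Z⁻¹ * p ^ 2 * (π Z) ^ 2)
        (r * Z⁻¹ * (2 * P Z) * (π Z) ^ 2) (P Z) := by
      have h2 : HasDerivAt (fun p : ℝ => p ^ 2) (2 * P Z) (P Z) := by
        simpa using hasDerivAt_pow 2 (P Z)
      exact (h2.const_mul (r * Z⁻¹)).mul_const ((π Z) ^ 2)
    have t2 : HasDerivAt (fun p : ℝ => (s + (1 - a * s) * Z⁻¹ * p) * (π Z))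
        ((1 - a * s) * Z⁻¹ * (π Z)) (P Z) := by
      have := (((hasDerivAt_id (P Z)).const_mul ((1 - a * s) * Z⁻¹)).const_add s).mul_const (π Z)
      simpa [mul_assoc] using this
    have t3 : HasDerivAt (fun p : ℝ => (b / (2 * r * (b - 1))) * p ^ (b - 1))
        ((b / (2 * r * (b - 1))) * ((b - 1) * (P Z) ^ (b - 1 - 1))) (P Z) := by
      exact (Real.hasDerivAt_rpow_const (Or.inl hu.ne')).const_mul _
    have hd := (t1.add t2).sub t3
    rw [e1, show deriv (fun p : ℝ => r * Z⁻¹ * p ^ 2 * (π Z) ^ 2 + (s + (1 - a * s) * Z⁻¹ * p) * (π Z)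
          - (b / (2 * r * (b - 1))) * p ^ (b - 1)) (P Z) = _ from hd.deriv]
    have hexp : b - 1 - 1 = b - 2 := by ring
    rw [hexp]
    field_simp
    try ring
  intro Z hZ
  have hne : Z ≠ 0 := ne_of_gt hZ
  have hu : (0:ℝ) < P Z := hPpos Z hZ
  -- second derivative via the explicit first Hamilton equation
  have heq : deriv P =ᶠ[nhds Z]
      (fun W => 2 * r * W⁻¹ * (P W) ^ 2 * (π W) + s + (1 - a * s) * W⁻¹ * (P W)) := by
    filter_upwards [isOpen_Ioi.mem_nhds hZ] with W hW
    exact ham1' W hW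
  have hdP : HasDerivAt P (deriv P Z) Z := (hPdiff Z hZ).hasDerivAt
  have hdπ : HasDerivAt π (deriv π Z) Z := (hπdiff Z hZ).hasDerivAt
  have hinv : HasDerivAt (fun x : ℝ => x⁻¹) (-(Z ^ 2)⁻¹) Z := hasDerivAt_inv hne
  have hP2 : HasDerivAt (fun W => (P W) ^ 2) (2 * P Z * deriv P Z) Z := by
    exact (by simpa using hdP.pow 2 : HasDerivAt (P ^ 2) (2 * P Z * deriv P Z) Z)
  have hF : HasDerivAt
      (fun W => 2 * r * W⁻¹ * (P W) ^ 2 * (π W) + s + (1 - a * s) * W⁻¹ * (P W))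
      (((2 * r * (-(Z ^ 2)⁻¹)) * (P Z) ^ 2 + (2 * r * Z⁻¹) * (2 * P Z * deriv P Z)) * (π Z)
        + (2 * r * Z⁻¹ * (P Z) ^ 2) * (deriv π Z)
        + ((1 - a * s) * (-(Z ^ 2)⁻¹) * (P Z) + (1 - a * s) * Z⁻¹ * (deriv P Z))) Z := by
    have h1 := (((hinv.const_mul (2 * r)).mul hP2).mul hdπ).add_const s
    have h2 := (hinv.const_mul (1 - a * s)).mul hdP
    have := h1.add h2
    refine this.congr_deriv ?_
    simp only [Pi.mul_apply]
    try ring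
  have hsecond : deriv (deriv P) Z =
      ((2 * r * (-(Z ^ 2)⁻¹)) * (P Z) ^ 2 + (2 * r * Z⁻¹) * (2 * P Z * deriv P Z)) * (π Z)
        + (2 * r * Z⁻¹ * (P Z) ^ 2) * (deriv π Z)
        + ((1 - a * s) * (-(Z ^ 2)⁻¹) * (P Z) + (1 - a * s) * Z⁻¹ * (deriv P Z)) := by
    rw [heq.deriv_eq, hF.deriv]
  rw [hsecond, ham2' Z hZ, ham1' Z hZ]
  have key : (P Z) ^ b = (P Z) ^ (b - 2) * (P Z) ^ 2 := by
    rw [← Real.rpow_natCast (P Z) 2, ← Real.rpow_add hu]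
    norm_num
  rw [key]
  rcases hsgn with rfl | rfl <;> field_simp <;> ring
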